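/- Let M be a positive semi-definite operator on ℂ⁸⊗H with M ≤ 1, let {|φ_l⟩}_{l=0}^{7} be an orthonormal basis of ℂ⁸, and let σ_1 be a full-rank density matrix on H. If Tr[(|φ_0⟩⟨φ_0| ⊗ σ_1) M] = 1, then M = |φ_0⟩⟨φ_0| ⊗ 1_H + L, where L is positive semi-definite and (⟨φ_0|⊗1)L(|φ_l⟩⊗1) = 0 = (⟨φ_l|⊗1)L(|φ_0⟩⊗1) for all l. -/

import Mathlib

open Matrix Finset
open scoped ComplexOrder Kronecker

noncomputable section

lemma kron_conjT {m n : Type*} [Fintype m] [Fintype n]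
    (A : Matrix m m ℂ) (B : Matrix n n ℂ) : (A ⊗ₖ B)ᴴ = Aᴴ ⊗ₖ Bᴴ := by
  ext ⟨i,p⟩ ⟨j,q⟩
  simp [conjTranspose_apply, kroneckerMap_apply]

lemma posSemidef_iff_eq_transpose_mul_self {n : Type*} [Fintype n] {A : Matrix n n ℂ} :
    A.PosSemidef ↔ ∃ B : Matrix n n ℂ, A = Bᴴ * B := by
  classical
  open scoped MatrixOrder in
  constructor
  · intro hA
    obtain ⟨B, hB⟩ := CStarAlgebra.nonneg_iff_eq_star_mul_self.mp hA.nonneg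
    exact ⟨B, hB⟩
  · rintro ⟨B, rfl⟩
    exact posSemidef_conjTranspose_mul_self B

lemma psd_kron {m n : Type*} [Fintype m] [Fintype n]
    {A : Matrix m m ℂ} {B : Matrix n n ℂ}
    (hA : A.PosSemidef) (hB : B.PosSemidef) : (A ⊗ₖ B).PosSemidef := by
  obtain ⟨C, rfl⟩ := posSemidef_iff_eq_transpose_mul_self.mp hA
  obtain ⟨D, rfl⟩ := posSemidef_iff_eq_transpose_mul_self.mp hB
  rw [mul_kronecker_mul, ← kron_conjT]
  exact posSemidef_conjTranspose_mul_self _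

lemma psd_trace_zero {n : Type*} [Fintype n] {A : Matrix n n ℂ}
    (hA : A.PosSemidef) (h : A.trace = 0) : A = 0 := by
  obtain ⟨C, rfl⟩ := posSemidef_iff_eq_transpose_mul_self.mp hA
  suffices hC : C = 0 by simp [hC]
  have h' : ∑ i, ∑ j, star (C j i) * C j i = 0 := by
    simpa [Matrix.trace, Matrix.diag, mul_apply, conjTranspose_apply] using h
  ext j i
  have h1 : ∀ i ∈ Finset.univ, (0:ℂ) ≤ ∑ j, star (C j i) * C j i :=
    fun i _ => Finset.sum_nonneg fun j _ => star_mul_self_nonneg _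
  have h2 := (Finset.sum_eq_zero_iff_of_nonneg h1).mp h'
  have h3 := (Finset.sum_eq_zero_iff_of_nonneg
    (fun j _ => star_mul_self_nonneg (C j i))).mp (h2 i (Finset.mem_univ _)) j (Finset.mem_univ _)
  have := mul_eq_zero.mp h3
  simpa [star_eq_zero] using this.imp id id

lemma psd_mul_eq_zero {n : Type*} [Fintype n] {A B : Matrix n n ℂ}
    (hA : A.PosSemidef) (hB : B.PosSemidef) (h : (A * B).trace = 0) : A * B = 0 := by
  obtain ⟨C, hC⟩ := posSemidef_iff_eq_transpose_mul_self.mp hB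
  obtain ⟨D, hD⟩ := posSemidef_iff_eq_transpose_mul_self.mp hA
  have htr : (C * A * Cᴴ).trace = 0 := by
    rw [trace_mul_cycle, ← hC, trace_mul_comm]
    exact h
  have hz : C * A * Cᴴ = 0 := psd_trace_zero (hA.mul_mul_conjTranspose_same C) htr
  have hz2 : (D * Cᴴ)ᴴ * (D * Cᴴ) = 0 := by
    rw [conjTranspose_mul, conjTranspose_conjTranspose]
    calc C * Dᴴ * (D * Cᴴ) = C * (Dᴴ * D) * Cᴴ := by noncomm_ring
      _ = 0 := by rw [← hD]; exact hz
  have hDC : D * Cᴴ = 0 := conjTranspose_mul_self_eq_zero.mp hz2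
  rw [hD, hC]
  calc Dᴴ * D * (Cᴴ * C) = Dᴴ * (D * Cᴴ) * C := by noncomm_ring
    _ = 0 := by rw [hDC]; noncomm_ring


def inn {n : Type*} [Fintype n] (v w : n → ℂ) : ℂ := ∑ i, star (v i) * w i

def proj {n : Type*} (v : n → ℂ) : Matrix n n ℂ := Matrix.vecMulVec v (star v)

/-- Block `(⟨v|⊗1) L (|w⟩⊗1)` of an operator on `ℂ⁸ ⊗ H`. -/
def blk {D nH : Type*} [Fintype D] [Fintype nH]
    (L : Matrix (D × nH) (D × nH) ℂ) (v w : D → ℂ) : Matrix nH nH ℂ :=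
  Matrix.of fun p q => ∑ i, ∑ j, star (v i) * L (i, p) (j, q) * w j

/-- If `0 ≤ M ≤ 1` on `ℂ⁸ ⊗ H` and `Tr[(|φ₀⟩⟨φ₀| ⊗ σ₁) M] = 1` for a full-rank
density matrix `σ₁`, then `M = |φ₀⟩⟨φ₀| ⊗ 1 + L` with `L ≥ 0` having vanishing
blocks in the row and column of `|φ₀⟩`. -/
theorem stmt_15 {nH : Type*} [Fintype nH] [DecidableEq nH]
    (M : Matrix (Fin 8 × nH) (Fin 8 × nH) ℂ)
    (hpos : M.PosSemidef)
    (hle : ((1 : Matrix (Fin 8 × nH) (Fin 8 × nH) ℂ) - M).PosSemidef)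
    (φ : Fin 8 → Fin 8 → ℂ)
    (hon : ∀ l l' : Fin 8, inn (φ l) (φ l') = if l = l' then 1 else 0)
    (hspan : Submodule.span ℂ (Set.range φ) = ⊤)
    (σ1 : Matrix nH nH ℂ) (hσ : σ1.PosDef) (hσtr : σ1.trace = 1)
    (htr : ((proj (φ 0) ⊗ₖ σ1) * M).trace = 1) :
    ∃ L : Matrix (Fin 8 × nH) (Fin 8 × nH) ℂ,
      L.PosSemidef ∧
      M = proj (φ 0) ⊗ₖ (1 : Matrix nH nH ℂ) + L ∧
      ∀ l : Fin 8, blk L (φ 0) (φ l) = 0 ∧ blk L (φ l) (φ 0) = 0 := by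
  have hvv : inn (φ 0) (φ 0) = 1 := by simpa using hon 0 0
  set P := proj (φ 0) with hPdef
  have hPH : Pᴴ = P := by
    ext i j
    simp [hPdef, proj, vecMulVec_apply, conjTranspose_apply, mul_comm]
  have hP2 : P * P = P := by
    ext i j
    have e : (P * P) i j = (φ 0 i * star (φ 0 j)) * inn (φ 0) (φ 0) := by
      simp only [mul_apply, hPdef, proj, vecMulVec_apply, inn, Finset.mul_sum, Pi.star_apply]
      exact Finset.sum_congr rfl fun k _ => by ring
    rw [e, hvv, mul_one]
    simp [hPdef, proj, vecMulVec_apply]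
  have htrP : P.trace = 1 := by
    have e : P.trace = inn (φ 0) (φ 0) := by
      simp [hPdef, Matrix.trace, Matrix.diag, proj, vecMulVec_apply, inn, mul_comm]
    rw [e, hvv]
  have hPpsd : P.PosSemidef := by
    rw [hPdef, proj, vecMulVec_eq Unit, ← conjTranspose_replicateCol]
    exact posSemidef_self_mul_conjTranspose _
  have hApsd : (P ⊗ₖ σ1).PosSemidef := psd_kron hPpsd hσ.posSemidef
  have htrA0 : ((P ⊗ₖ σ1) * (1 - M)).trace = 0 := by
    rw [mul_sub, mul_one, trace_sub, trace_kronecker, htrP, hσtr, htr]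
    ring
  have hAz : (P ⊗ₖ σ1) * (1 - M) = 0 := psd_mul_eq_zero hApsd hle htrA0
  have hinv : σ1⁻¹ * σ1 = 1 :=
    nonsing_inv_mul σ1 ((isUnit_iff_isUnit_det σ1).mp hσ.isUnit)
  set Q := P ⊗ₖ (1 : Matrix nH nH ℂ) with hQdef
  have hQz : Q * (1 - M) = 0 := by
    have h0 : (P ⊗ₖ σ1⁻¹) * ((P ⊗ₖ σ1) * (1 - M)) = 0 := by rw [hAz, mul_zero]
    rwa [← mul_assoc, ← mul_kronecker_mul, hP2, hinv] at h0
  have hQM : Q * M = Q := by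
    have h0 := hQz
    rw [mul_sub, mul_one, sub_eq_zero] at h0
    exact h0.symm
  have hQH : Qᴴ = Q := by rw [hQdef, kron_conjT, hPH, conjTranspose_one]
  have hMQ : M * Q = Q := by
    have h0 := congrArg conjTranspose hQM
    rwa [conjTranspose_mul, hQH, hpos.1] at h0
  have hQ2 : Q * Q = Q := by
    rw [hQdef, ← mul_kronecker_mul, hP2, one_mul]
  have hLform : (1 - Q)ᴴ * M * (1 - Q) = M - Q := by
    rw [conjTranspose_sub, conjTranspose_one, hQH]
    have e1 : (1 - Q) * M * (1 - Q) = M - Q * M - M * Q + Q * M * Q := by noncomm_ring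
    rw [e1, hQM, hMQ, hQ2]
    abel
  have hLpsd : (M - Q).PosSemidef := hLform ▸ hpos.conjTranspose_mul_mul_same (1 - Q)
  have hQL : Q * (M - Q) = 0 := by rw [mul_sub, hQM, hQ2, sub_self]
  have hLQ : (M - Q) * Q = 0 := by rw [sub_mul, hMQ, hQ2, sub_self]
  obtain ⟨i0, hi0⟩ : ∃ i, φ 0 i ≠ 0 := by
    by_contra hc
    push_neg at hc
    rw [inn] at hvv
    simp [hc] at hvv
  have hQapp : ∀ (i k : Fin 8) (p r : nH),
      Q (i, p) (k, r) = (φ 0 i * star (φ 0 k)) * (if p = r then 1 else 0) := by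
    intro i k p r
    rw [hQdef, hPdef]
    simp [proj, vecMulVec_apply, kroneckerMap_apply, one_apply]
  have hrow : ∀ (p : nH) (j : Fin 8) (q : nH),
      ∑ k, star (φ 0 k) * (M - Q) (k, p) (j, q) = 0 := by
    intro p j q
    have h0 := congrFun (congrFun hQL (i0, p)) (j, q)
    rw [Matrix.mul_apply, Fintype.sum_prod_type] at h0
    simp only [hQapp, Matrix.zero_apply, mul_ite, mul_one,
      mul_zero, ite_mul, zero_mul, Finset.sum_ite_eq, Finset.mem_univ, if_true] at h0
    have h1 : φ 0 i0 * ∑ k, star (φ 0 k) * (M - Q) (k, p) (j, q) = 0 := by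
      rw [Finset.mul_sum, ← h0]
      exact Finset.sum_congr rfl fun k _ => by ring
    exact (mul_eq_zero.mp h1).resolve_left hi0
  have hcol : ∀ (i : Fin 8) (p q : nH),
      ∑ k, (M - Q) (i, p) (k, q) * φ 0 k = 0 := by
    intro i p q
    have h0 := congrFun (congrFun hLQ (i, p)) (i0, q)
    rw [Matrix.mul_apply, Fintype.sum_prod_type] at h0
    simp only [hQapp, Matrix.zero_apply, mul_ite, mul_one,
      mul_zero, ite_mul, zero_mul, Finset.sum_ite_eq, Finset.sum_ite_eq',
      Finset.mem_univ, if_true] at h0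
    have h1 : (∑ k, (M - Q) (i, p) (k, q) * φ 0 k) * star (φ 0 i0) = 0 := by
      rw [Finset.sum_mul, ← h0]
      exact Finset.sum_congr rfl fun k _ => by ring
    have hstar : star (φ 0 i0) ≠ 0 := by simpa [star_eq_zero] using hi0
    exact (mul_eq_zero.mp h1).resolve_right hstar
  refine ⟨M - Q, hLpsd, by abel, fun l => ⟨?_, ?_⟩⟩
  · ext p q
    simp only [blk, Matrix.of_apply, Matrix.zero_apply]
    rw [Finset.sum_comm]
    refine Finset.sum_eq_zero fun j _ => ?_
    have e : ∑ i, star (φ 0 i) * (M - Q) (i, p) (j, q) * φ l j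
        = (∑ i, star (φ 0 i) * (M - Q) (i, p) (j, q)) * φ l j := by
      rw [Finset.sum_mul]
    rw [e, hrow p j q, zero_mul]
  · ext p q
    simp only [blk, Matrix.of_apply, Matrix.zero_apply]
    refine Finset.sum_eq_zero fun i _ => ?_
    have e : ∑ j, star (φ l i) * (M - Q) (i, p) (j, q) * φ 0 j
        = star (φ l i) * ∑ j, (M - Q) (i, p) (j, q) * φ 0 j := by
      rw [Finset.mul_sum]
      exact Finset.sum_congr rfl fun j _ => by ring
    rw [e, hcol i p q, mul_zero]
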